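/- Let A ⊂ ℤ² be finite nonempty with ℓ₁, ℓ₂ as above. On the free ℂ-vector space V with basis {p_{n,i} : (n,i) ∈ ℤ² × ℤ}, define a ℂ-bilinear product by p_{n,i} · p_{n',i'} = Σ_{j=0}^{ℓ₂(n,n')} binom(ℓ₂(n,n'), j) p_{n+n', i+i'+j}. Then this product is associative and commutative with unit p_{0,0}. -/

import Mathlib

/-- `ℓ₁(n) = max_{α ∈ A} ⟨n, α⟩`. -/
def ell1 (A : Finset (ℤ × ℤ)) (hA : A.Nonempty) (n : ℤ × ℤ) : ℤ :=
  A.sup' hA (fun α => n.1 * α.1 + n.2 * α.2)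

/-- `ℓ₂(n, n') = ℓ₁(n) + ℓ₁(n') − ℓ₁(n + n')`. -/
def ell2 (A : Finset (ℤ × ℤ)) (hA : A.Nonempty) (n n' : ℤ × ℤ) : ℤ :=
  ell1 A hA n + ell1 A hA n' - ell1 A hA (n + n')

/-- The ℂ-bilinear product on the free vector space with basis `{p_{n,i}}` (realized as
finitely supported functions `((ℤ × ℤ) × ℤ) →₀ ℂ`, with `p_{n,i} = single (n,i) 1`),
determined on basis elements by
`p_{n,i} · p_{n',i'} = Σ_{j=0}^{ℓ₂(n,n')} binom(ℓ₂(n,n'), j) p_{n+n', i+i'+j}`. -/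
noncomputable def mulV (A : Finset (ℤ × ℤ)) (hA : A.Nonempty)
    (f g : ((ℤ × ℤ) × ℤ) →₀ ℂ) : ((ℤ × ℤ) × ℤ) →₀ ℂ :=
  f.sum fun k c => g.sum fun k' c' =>
    ∑ j ∈ Finset.range ((ell2 A hA k.1 k'.1).toNat + 1),
      (c * c' * ((ell2 A hA k.1 k'.1).toNat.choose j : ℂ)) •
        Finsupp.single (k.1 + k'.1, k.2 + k'.2 + (j : ℤ)) (1 : ℂ)

namespace Stmt5Aux

open LaurentPolynomial

variable (A : Finset (ℤ × ℤ)) (hA : A.Nonempty)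

/-- A fixed linear functional given by an element of `A`. -/
noncomputable def lin (n : ℤ × ℤ) : ℤ := n.1 * hA.choose.1 + n.2 * hA.choose.2

lemma lin_le_ell1 (n : ℤ × ℤ) : lin A hA n ≤ ell1 A hA n :=
  Finset.le_sup' (fun α : ℤ × ℤ => n.1 * α.1 + n.2 * α.2) hA.choose_spec

lemma lin_add (n n' : ℤ × ℤ) : lin A hA (n + n') = lin A hA n + lin A hA n' := by
  simp only [lin, Prod.fst_add, Prod.snd_add]; ring

lemma ell1_add_le (n n' : ℤ × ℤ) : ell1 A hA (n + n') ≤ ell1 A hA n + ell1 A hA n' := by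
  apply Finset.sup'_le
  intro b hb
  have h1 := Finset.le_sup' (fun α : ℤ × ℤ => n.1 * α.1 + n.2 * α.2) hb
  have h2 := Finset.le_sup' (fun α : ℤ × ℤ => n'.1 * α.1 + n'.2 * α.2) hb
  simp only [Prod.fst_add, Prod.snd_add]
  have h : (n.1 + n'.1) * b.1 + (n.2 + n'.2) * b.2
      = (n.1 * b.1 + n.2 * b.2) + (n'.1 * b.1 + n'.2 * b.2) := by ring
  rw [h]
  exact add_le_add h1 h2

/-- The normalized (nonnegative) version of `ℓ₁`. -/
noncomputable def m (n : ℤ × ℤ) : ℕ := (ell1 A hA n - lin A hA n).toNat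

lemma m_zero : m A hA 0 = 0 := by
  have h : ell1 A hA 0 = lin A hA 0 := by
    have h1 := lin_le_ell1 A hA 0
    have h2 : ell1 A hA 0 ≤ lin A hA 0 := by
      apply Finset.sup'_le
      intro b hb
      simp [lin]
    omega
  simp [m, h]

lemma key_nat (n n' : ℤ × ℤ) :
    m A hA n + m A hA n' = m A hA (n + n') + (ell2 A hA n n').toNat := by
  have h1 := lin_le_ell1 A hA n
  have h2 := lin_le_ell1 A hA n'
  have h3 := lin_le_ell1 A hA (n + n')
  have h4 := ell1_add_le A hA n n'
  have h5 := lin_add A hA n n'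
  simp only [m, ell2]
  omega

/-- `1 + t` in the Laurent polynomial ring. -/
noncomputable def W : LaurentPolynomial ℂ := 1 + T 1

lemma W_ne_zero : W ≠ 0 := by
  have h : W = Polynomial.toLaurent (1 + Polynomial.X : Polynomial ℂ) := by
    simp [W]
  rw [h, Polynomial.toLaurent_ne_zero]
  intro h'
  have h2 := congrArg (fun p => p.coeff 1) h'
  simp [Polynomial.coeff_one] at h2

lemma W_pow_ne_zero (k : ℕ) : W ^ k ≠ 0 := pow_ne_zero _ W_ne_zero

/-- The binomial expansion `(1+t)^L = Σ_j C(L,j) t^j`. -/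
lemma W_pow_eq (L : ℕ) :
    W ^ L = ∑ j ∈ Finset.range (L + 1),
      LaurentPolynomial.C ((L.choose j : ℂ)) * T (j : ℤ) := by
  rw [W, add_comm, (Commute.all (T 1) 1).add_pow]
  refine Finset.sum_congr rfl fun j hj => ?_
  rw [one_pow, mul_one, T_pow, mul_one, map_natCast, mul_comm]

/-- The embedding of `V` into the group algebra of `ℤ²` over Laurent polynomials. -/
noncomputable def Φ (f : ((ℤ × ℤ) × ℤ) →₀ ℂ) :
    AddMonoidAlgebra (LaurentPolynomial ℂ) (ℤ × ℤ) :=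
  f.sum fun k c =>
    AddMonoidAlgebra.single k.1 (LaurentPolynomial.C c * T k.2 * W ^ m A hA k.1)

lemma Φ_zero : Φ A hA 0 = 0 := Finsupp.sum_zero_index

lemma Φ_add (f g : ((ℤ × ℤ) × ℤ) →₀ ℂ) : Φ A hA (f + g) = Φ A hA f + Φ A hA g := by
  apply Finsupp.sum_add_index'
  · intro a; simp
  · intro a b₁ b₂
    rw [map_add, add_mul, add_mul, AddMonoidAlgebra.single_add]

lemma Φ_finset_sum {ι : Type*} (s : Finset ι) (h : ι → (((ℤ × ℤ) × ℤ) →₀ ℂ)) :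
    Φ A hA (∑ j ∈ s, h j) = ∑ j ∈ s, Φ A hA (h j) := by
  classical
  induction s using Finset.induction_on with
  | empty => simp [Φ_zero]
  | insert _ _ hx ih => rw [Finset.sum_insert hx, Finset.sum_insert hx, Φ_add, ih]

lemma Φ_single (k : (ℤ × ℤ) × ℤ) (c : ℂ) :
    Φ A hA (Finsupp.single k c)
      = AddMonoidAlgebra.single k.1
          (LaurentPolynomial.C c * T k.2 * W ^ m A hA k.1) := by
  apply Finsupp.sum_single_index
  simp

lemma single_finset_sum {ι : Type*} (s : Finset ι) (a : ℤ × ℤ)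
    (h : ι → LaurentPolynomial ℂ) :
    AddMonoidAlgebra.single a (∑ j ∈ s, h j)
      = ∑ j ∈ s, AddMonoidAlgebra.single a (h j) :=
  map_sum (AddMonoidAlgebra.singleAddHom a) h s

lemma mulV_zero_left (g : ((ℤ × ℤ) × ℤ) →₀ ℂ) : mulV A hA 0 g = 0 :=
  Finsupp.sum_zero_index

lemma mulV_zero_right (f : ((ℤ × ℤ) × ℤ) →₀ ℂ) : mulV A hA f 0 = 0 := by
  unfold mulV
  simp [Finsupp.sum_zero_index]

lemma mulV_add_left (f f' g : ((ℤ × ℤ) × ℤ) →₀ ℂ) :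
    mulV A hA (f + f') g = mulV A hA f g + mulV A hA f' g := by
  unfold mulV
  apply Finsupp.sum_add_index'
  · intro a; simp
  · intro a b₁ b₂
    rw [← Finsupp.sum_add]
    apply Finsupp.sum_congr
    intro k' _
    rw [← Finset.sum_add_distrib]
    apply Finset.sum_congr rfl
    intro j _
    rw [← add_smul]
    congr 1
    ring

lemma mulV_add_right (f g g' : ((ℤ × ℤ) × ℤ) →₀ ℂ) :
    mulV A hA f (g + g') = mulV A hA f g + mulV A hA f g' := by
  unfold mulV
  rw [← Finsupp.sum_add]
  apply Finsupp.sum_congr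
  intro k _
  apply Finsupp.sum_add_index'
  · intro a; simp
  · intro a b₁ b₂
    rw [← Finset.sum_add_distrib]
    apply Finset.sum_congr rfl
    intro j _
    rw [← add_smul]
    congr 1
    ring

lemma mulV_single_single (k k' : (ℤ × ℤ) × ℤ) (c c' : ℂ) :
    mulV A hA (Finsupp.single k c) (Finsupp.single k' c')
      = ∑ j ∈ Finset.range ((ell2 A hA k.1 k'.1).toNat + 1),
          (c * c' * ((ell2 A hA k.1 k'.1).toNat.choose j : ℂ)) •
            Finsupp.single (k.1 + k'.1, k.2 + k'.2 + (j : ℤ)) (1 : ℂ) := by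
  unfold mulV
  rw [Finsupp.sum_single_index, Finsupp.sum_single_index]
  · simp
  · simp

lemma Φ_mul_single (k k' : (ℤ × ℤ) × ℤ) (c c' : ℂ) :
    Φ A hA (mulV A hA (Finsupp.single k c) (Finsupp.single k' c'))
      = Φ A hA (Finsupp.single k c) * Φ A hA (Finsupp.single k' c') := by
  rw [mulV_single_single, Φ_single, Φ_single, AddMonoidAlgebra.single_mul_single,
    Φ_finset_sum]
  have hΦs : ∀ j : ℕ, ∀ c'' : ℂ,
      Φ A hA (c'' • Finsupp.single ((k.1 + k'.1, k.2 + k'.2 + (j : ℤ))) (1 : ℂ))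
        = AddMonoidAlgebra.single (k.1 + k'.1)
            (LaurentPolynomial.C c'' * T (k.2 + k'.2 + (j : ℤ))
              * W ^ m A hA (k.1 + k'.1)) := by
    intro j c''
    rw [Finsupp.smul_single', Φ_single, mul_one]
  simp only [hΦs]
  set L := (ell2 A hA k.1 k'.1).toNat with hL
  have hpow : W ^ m A hA k.1 * W ^ m A hA k'.1
      = W ^ m A hA (k.1 + k'.1) * W ^ L := by
    rw [← pow_add, ← pow_add, key_nat]
  have hval : LaurentPolynomial.C c * T k.2 * W ^ m A hA k.1
        * (LaurentPolynomial.C c' * T k'.2 * W ^ m A hA k'.1)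
      = ∑ j ∈ Finset.range (L + 1),
          LaurentPolynomial.C (c * c' * (L.choose j : ℂ)) * T (k.2 + k'.2 + (j : ℤ))
            * W ^ m A hA (k.1 + k'.1) := by
    have h1 : LaurentPolynomial.C c * T k.2 * W ^ m A hA k.1
          * (LaurentPolynomial.C c' * T k'.2 * W ^ m A hA k'.1)
        = LaurentPolynomial.C c * LaurentPolynomial.C c' * (T k.2 * T k'.2)
            * W ^ m A hA (k.1 + k'.1) * W ^ L := by
      rw [mul_assoc (LaurentPolynomial.C c * LaurentPolynomial.C c' * (T k.2 * T k'.2)),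
        ← hpow]
      ring
    rw [h1, W_pow_eq L, Finset.mul_sum]
    refine Finset.sum_congr rfl fun j hj => ?_
    rw [map_mul, map_mul, T_add, T_add]
    ring
  rw [hval, single_finset_sum]

lemma Φ_mul (f g : ((ℤ × ℤ) × ℤ) →₀ ℂ) :
    Φ A hA (mulV A hA f g) = Φ A hA f * Φ A hA g := by
  induction f using Finsupp.induction_linear with
  | zero => rw [mulV_zero_left, Φ_zero, zero_mul]
  | add f f' hf hf' => rw [mulV_add_left, Φ_add, Φ_add, add_mul, hf, hf']
  | single k c =>
    induction g using Finsupp.induction_linear with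
    | zero => rw [mulV_zero_right, Φ_zero, mul_zero]
    | add g g' hg hg' => rw [mulV_add_right, Φ_add, Φ_add, mul_add, hg, hg']
    | single k' c' => exact Φ_mul_single A hA k k' c c'

/-- View an element of the group algebra as a plain finitely supported function. -/
def toF : AddMonoidAlgebra (LaurentPolynomial ℂ) (ℤ × ℤ) →
    ((ℤ × ℤ) →₀ LaurentPolynomial ℂ) := fun x => x.coeff

/-- View a Laurent polynomial as a plain finitely supported function. -/
def toL : LaurentPolynomial ℂ → (ℤ →₀ ℂ) := fun x => x.coeff

lemma toF_inj : Function.Injective toF := fun _ _ h => AddMonoidAlgebra.coeff_injective h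

/-- The `n₀`-slice of `f`, as a Laurent polynomial. -/
noncomputable def slice (f : ((ℤ × ℤ) × ℤ) →₀ ℂ) (n₀ : ℤ × ℤ) : LaurentPolynomial ℂ :=
  ∑ k ∈ f.support, if k.1 = n₀ then AddMonoidAlgebra.single k.2 (f k) else 0

lemma toF_Φ_apply (f : ((ℤ × ℤ) × ℤ) →₀ ℂ) (n₀ : ℤ × ℤ) :
    toF (Φ A hA f) n₀ = slice f n₀ * W ^ m A hA n₀ := by
  have h0 : toF (Φ A hA f) =
      f.sum fun k c =>
        Finsupp.single k.1 (LaurentPolynomial.C c * T k.2 * W ^ m A hA k.1) := by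
    simp only [toF, Φ, AddMonoidAlgebra.coeff_finsuppSum, AddMonoidAlgebra.coeff_single]
  rw [h0, Finsupp.sum_apply, Finsupp.sum, slice, Finset.sum_mul]
  refine Finset.sum_congr rfl fun k _ => ?_
  rw [Finsupp.single_apply]
  by_cases hk : k.1 = n₀
  · subst hk
    simp [single_eq_C_mul_T]
  · simp [hk]

lemma toL_slice_apply (f : ((ℤ × ℤ) × ℤ) →₀ ℂ) (n₀ : ℤ × ℤ) (i₀ : ℤ) :
    toL (slice f n₀) i₀ = f (n₀, i₀) := by
  have h0 : toL (slice f n₀)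
      = ∑ k ∈ f.support, if k.1 = n₀ then Finsupp.single k.2 (f k) else (0 : ℤ →₀ ℂ) := by
    simp only [toL, slice, AddMonoidAlgebra.coeff_sum, apply_ite AddMonoidAlgebra.coeff,
      AddMonoidAlgebra.coeff_single, AddMonoidAlgebra.coeff_zero]
  rw [h0, Finsupp.finset_sum_apply]
  have h1 : ∀ k ∈ f.support,
      (if k.1 = n₀ then Finsupp.single k.2 (f k) else (0 : ℤ →₀ ℂ)) i₀
        = if k = (n₀, i₀) then f k else 0 := by
    intro k _
    by_cases h : k = (n₀, i₀)
    · subst h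
      rw [if_pos rfl, if_pos rfl, Finsupp.single_eq_same]
    · by_cases h2 : k.1 = n₀
      · have h3 : k.2 ≠ i₀ := fun h4 => h (Prod.ext h2 h4)
        rw [if_pos h2, if_neg h, Finsupp.single_eq_of_ne h3.symm]
      · rw [if_neg h2, if_neg h, Finsupp.zero_apply]
  rw [Finset.sum_congr rfl h1, Finset.sum_ite_eq' f.support (n₀, i₀) (fun k => f k)]
  by_cases h : (n₀, i₀) ∈ f.support
  · rw [if_pos h]
  · rw [if_neg h, (Finsupp.notMem_support_iff.mp h)]

lemma Φ_inj : Function.Injective (Φ A hA) := by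
  intro f g hfg
  have hslice : ∀ n₀ : ℤ × ℤ, slice f n₀ = slice g n₀ := by
    intro n₀
    have h1 : slice f n₀ * W ^ m A hA n₀ = slice g n₀ * W ^ m A hA n₀ := by
      rw [← toF_Φ_apply, ← toF_Φ_apply, hfg]
    exact mul_right_cancel₀ (W_pow_ne_zero _) h1
  ext k
  obtain ⟨n₀, i₀⟩ := k
  rw [← toL_slice_apply f n₀ i₀, ← toL_slice_apply g n₀ i₀, hslice]

lemma Φ_one : Φ A hA (Finsupp.single ((0, 0), 0) (1 : ℂ)) = 1 := by
  rw [Φ_single]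
  have h : ((0 : ℤ), (0 : ℤ)) = (0 : ℤ × ℤ) := rfl
  simp only [h, m_zero, pow_zero, map_one, one_mul, mul_one, T_zero]
  exact (AddMonoidAlgebra.one_def).symm

end Stmt5Aux

/-- The product `mulV` is associative and commutative with unit `p_{0,0}`. -/
theorem stmt5 (A : Finset (ℤ × ℤ)) (hA : A.Nonempty) :
    (∀ f g h : ((ℤ × ℤ) × ℤ) →₀ ℂ,
      mulV A hA (mulV A hA f g) h = mulV A hA f (mulV A hA g h)) ∧
    (∀ f g : ((ℤ × ℤ) × ℤ) →₀ ℂ, mulV A hA f g = mulV A hA g f) ∧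
    (∀ f : ((ℤ × ℤ) × ℤ) →₀ ℂ,
      mulV A hA (Finsupp.single ((0, 0), 0) (1 : ℂ)) f = f ∧
      mulV A hA f (Finsupp.single ((0, 0), 0) (1 : ℂ)) = f) := by
  refine ⟨fun f g h => ?_, fun f g => ?_, fun f => ⟨?_, ?_⟩⟩
  · apply Stmt5Aux.Φ_inj A hA
    rw [Stmt5Aux.Φ_mul, Stmt5Aux.Φ_mul, Stmt5Aux.Φ_mul, Stmt5Aux.Φ_mul, mul_assoc]
  · apply Stmt5Aux.Φ_inj A hA
    rw [Stmt5Aux.Φ_mul, Stmt5Aux.Φ_mul, mul_comm]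
  · apply Stmt5Aux.Φ_inj A hA
    rw [Stmt5Aux.Φ_mul, Stmt5Aux.Φ_one, one_mul]
  · apply Stmt5Aux.Φ_inj A hA
    rw [Stmt5Aux.Φ_mul, Stmt5Aux.Φ_one, mul_one]
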